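/- Fix integers n ≥ 1 and 1 ≤ k ≤ n. In ℤ[c_1,…,c_{n+k}], with the conventions c_0 = 1 and c_p = 0 for p < 0 or p > n+k, set h_r = det(c_{1+j−i})_{1≤i,j≤r}. Let J be the ideal generated by the elements h_r for n−k+1 ≤ r ≤ n together with the elements ∑_{p=k+1}^{r} (−1)^p c_p h_{r−p} for n+1 ≤ r ≤ n+k. Then h_r ∈ J for every r with n+1 ≤ r ≤ n+k. -/

import Mathlib

open MvPolynomial

/-- The element `c_p` of `ℤ[c_1,…,c_{n+k}]`, with the conventions `c_0 = 1` and
`c_p = 0` for `p < 0` or `p > n+k`. -/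
noncomputable def cGen (n k : ℕ) (p : ℤ) : MvPolynomial (Fin (n + k)) ℤ :=
  if h : 1 ≤ p ∧ p ≤ n + k then X ⟨p.toNat - 1, by omega⟩
  else if p = 0 then 1 else 0

/-- The `r × r` Schur determinant `h_r = det (c_{1+j-i})_{1 ≤ i,j ≤ r}`. -/
noncomputable def hDet (n k : ℕ) (r : ℕ) : MvPolynomial (Fin (n + k)) ℤ :=
  (Matrix.of fun i j : Fin r => cGen n k (1 + (j : ℤ) - (i : ℤ))).det

/-- The relation `∑_{p=k+1}^{r} (−1)^p c_p h_{r−p}`. -/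
noncomputable def cSumRel (n k : ℕ) (r : ℕ) : MvPolynomial (Fin (n + k)) ℤ :=
  ∑ p ∈ Finset.Icc (k + 1) r,
    (-1 : MvPolynomial (Fin (n + k)) ℤ) ^ p * cGen n k p * hDet n k (r - p)

lemma cGen_zero (n k : ℕ) : cGen n k 0 = 1 := by
  simp [cGen]

lemma cGen_nonpos (n k : ℕ) (p : ℤ) (hp : p ≤ 0) :
    cGen n k p = if p = 0 then 1 else 0 := by
  rw [cGen, dif_neg (by omega)]

lemma hDet_zero (n k : ℕ) : hDet n k 0 = 1 := by
  simp [hDet]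

lemma det_aux (n k : ℕ) : ∀ m : ℕ, ∀ j : Fin (m+1),
    (Matrix.of fun s t : Fin m =>
      cGen n k ((j.succAbove t : ℕ) - (s : ℕ) : ℤ)).det = hDet n k (m - (j : ℕ)) := by
  intro m
  induction m with
  | zero =>
    intro j
    have hj : 0 - (j : ℕ) = 0 := by omega
    rw [hj, hDet_zero]
    exact Matrix.det_fin_zero
  | succ m ih =>
    intro j
    induction j using Fin.cases with
    | zero =>
      rw [hDet]
      congr 1
      ext s t : 1
      simp only [Matrix.of_apply, Fin.zero_succAbove, Fin.val_succ]
      congr 1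
      push_cast
      ring
    | succ i =>
      rw [Matrix.det_succ_column_zero]
      rw [Finset.sum_eq_single 0]
      · have key : ((Matrix.of fun s t : Fin (m+1) =>
            cGen n k ((i.succ.succAbove t : ℕ) - (s : ℕ) : ℤ)).submatrix
            (Fin.succAbove 0) Fin.succ) =
            (Matrix.of fun s t : Fin m =>
              cGen n k ((i.succAbove t : ℕ) - (s : ℕ) : ℤ)) := by
          ext s t
          simp only [Matrix.submatrix_apply, Matrix.of_apply, Fin.succAbove_zero,
            Fin.succ_succAbove_succ, Fin.val_succ]
          congr 1
          push_cast
          ring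
        rw [key, ih i]
        simp only [Matrix.of_apply, Fin.succ_succAbove_zero, Fin.val_zero, Nat.cast_zero,
          sub_zero, pow_zero, one_mul, cGen_zero, Fin.val_succ]
        congr 1
        omega
      · intro s _ hs
        have : (((i.succ.succAbove 0 : ℕ) : ℤ) - (s : ℕ) : ℤ) ≠ 0 := by
          have : (i.succ.succAbove 0 : ℕ) = 0 := by simp
          rw [this]
          have : (s : ℕ) ≠ 0 := fun h => hs (Fin.ext h)
          omega
        rw [Matrix.of_apply]
        rw [cGen_nonpos n k _ (by
          have : (i.succ.succAbove 0 : ℕ) = 0 := by simp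
          rw [this]; push_cast; omega), if_neg this]
        ring
      · intro h
        exact absurd (Finset.mem_univ _) h

lemma hDet_succ (n k r : ℕ) :
    hDet n k (r+1) = ∑ j ∈ Finset.range (r+1),
      (-1 : MvPolynomial (Fin (n+k)) ℤ) ^ j * cGen n k (j+1) * hDet n k (r - j) := by
  rw [hDet, Matrix.det_succ_row_zero, ← Fin.sum_univ_eq_sum_range]
  refine Finset.sum_congr rfl fun j _ => ?_
  have key : ((Matrix.of fun s t : Fin (r+1) =>
      cGen n k (1 + (t : ℤ) - (s : ℤ))).submatrix Fin.succ j.succAbove) =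
      (Matrix.of fun s t : Fin r =>
        cGen n k ((j.succAbove t : ℕ) - (s : ℕ) : ℤ)) := by
    ext s t
    simp only [Matrix.submatrix_apply, Matrix.of_apply, Fin.val_succ]
    congr 1
    push_cast
    ring
  rw [key, det_aux n k r j]
  simp only [Matrix.of_apply, Fin.val_zero]
  push_cast
  ring_nf

lemma cSumRel_eq (n k r : ℕ) (hkr : k ≤ r) :
    cSumRel n k (r+1) = - ∑ j ∈ Finset.Ico k (r+1),
      (-1 : MvPolynomial (Fin (n+k)) ℤ) ^ j * cGen n k (j+1) * hDet n k (r - j) := by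
  rw [cSumRel, ← Finset.Ico_add_one_right_eq_Icc, show k + 1 = k + 1 from rfl,
    ← Finset.map_add_right_Ico k (r+1) 1, Finset.sum_map]
  rw [← Finset.sum_neg_distrib]
  refine Finset.sum_congr rfl fun j hj => ?_
  simp only [addRightEmbedding_apply]
  have h1 : r + 1 - (j + 1) = r - j := by omega
  rw [h1, pow_succ]
  push_cast
  ring

/-- With `J = (h_{n−k+1},…,h_n, ∑_{p=k+1}^{r}(−1)^p c_p h_{r−p} (n+1 ≤ r ≤ n+k))`,
one has `h_r ∈ J` for all `n+1 ≤ r ≤ n+k`. -/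
theorem hDet_mem_ideal (n k : ℕ) (hn : 1 ≤ n) (hk₁ : 1 ≤ k) (hk₂ : k ≤ n)
    (r : ℕ) (hr₁ : n + 1 ≤ r) (hr₂ : r ≤ n + k) :
    hDet n k r ∈ Ideal.span
      (hDet n k '' Set.Icc (n - k + 1) n ∪ cSumRel n k '' Set.Icc (n + 1) (n + k)) := by
  induction r using Nat.strong_induction_on with
  | _ r ih =>
  obtain ⟨r', rfl⟩ : ∃ r', r = r' + 1 := ⟨r - 1, by omega⟩
  set J := Ideal.span
      (hDet n k '' Set.Icc (n - k + 1) n ∪ cSumRel n k '' Set.Icc (n + 1) (n + k)) with hJ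
  rw [hDet_succ]
  have hkr : k ≤ r' + 1 := by omega
  rw [Finset.range_eq_Ico, ← Finset.sum_Ico_consecutive _ (Nat.zero_le k) hkr,
    ← Finset.range_eq_Ico]
  apply Ideal.add_mem
  · apply Ideal.sum_mem
    intro j hj
    rw [Finset.mem_range] at hj
    apply Ideal.mul_mem_left
    by_cases hle : r' - j ≤ n
    · exact Ideal.subset_span (Or.inl ⟨r' - j, ⟨by omega, hle⟩, rfl⟩)
    · exact ih (r' - j) (by omega) (by omega) (by omega)
  · have := cSumRel_eq n k r' (by omega)
    have h2 : ∑ j ∈ Finset.Ico k (r'+1),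
        (-1 : MvPolynomial (Fin (n+k)) ℤ) ^ j * cGen n k (j+1) * hDet n k (r' - j)
        = - cSumRel n k (r'+1) := by rw [this, neg_neg]
    rw [h2]
    exact neg_mem (Ideal.subset_span (Or.inr ⟨r' + 1, ⟨hr₁, hr₂⟩, rfl⟩))
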